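/- arXiv:1106.2428 — 2 statements merged into one kernel-verified Lean document; each statement's English description precedes it below -/
import Mathlib

section
/- Let Γ be a symmetric n×n matrix over GF(3) with zero diagonal, and let C = Γ + ωI over GF(9), where ω is a primitive element with ω² = ω + 1. Then the GF(3)-row span of C is a self-orthogonal additive code with respect to the Hermitian trace inner product, i.e., any two rows of C (including a row with itself) have Hermitian trace inner product zero. -/
open scoped BigOperators

instance : Fact (Nat.Prime 3) := ⟨by norm_num⟩

abbrev F9 := GaloisField 3 2
abbrev F3 := ZMod 3

noncomputable def conj9 (x : F9) : F9 := x ^ 3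

noncomputable def tr9 (x : F9) : F9 := x + x ^ 3

noncomputable def herm {n : ℕ} (ω : F9) (u v : Fin n → F9) : F9 :=
  tr9 (ω ^ 2 * ∑ i, u i * conj9 (v i))

/-- If `Γ` is a symmetric matrix over GF(3) with zero diagonal, then any two
rows of `C = Γ + ωI` (including a row with itself) have Hermitian trace inner
product zero: the row span of `C` is self-orthogonal. -/
theorem standard_form_selforthogonal {n : ℕ} (ω : F9) (hω : ω ^ 2 = ω + 1)
    (Γ : Matrix (Fin n) (Fin n) F3)
    (hsymm : Γ.IsSymm) (hdiag : ∀ j, Γ j j = 0) :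
    let M : Matrix (Fin n) (Fin n) F9 :=
      Γ.map (algebraMap F3 F9) + ω • (1 : Matrix (Fin n) (Fin n) F9)
    ∀ j k, herm ω (M j) (M k) = 0 := by
  intro M j k
  set φ := algebraMap F3 F9 with hφ
  have h3 : (3 : F9) = 0 := by exact_mod_cast CharP.cast_eq_zero F9 3
  have hc3 : ∀ c : F3, c ^ 3 = c := by decide
  have hφ3 : ∀ c : F3, (φ c) ^ 3 = φ c := fun c => by rw [← map_pow, hc3]
  have hM : ∀ p i, M p i = φ (Γ p i) + ω * (if p = i then 1 else 0) := by
    intro p i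
    simp [M, hφ, Matrix.add_apply, Matrix.map_apply, Matrix.smul_apply, Matrix.one_apply,
      mul_ite, mul_one, mul_zero]
  have hcube : ∀ p i, (M p i) ^ 3 = φ (Γ p i) + ω ^ 3 * (if p = i then 1 else 0) := by
    intro p i
    rw [hM, add_pow_char, hφ3, mul_pow]
    congr 1
    split <;> norm_num
  -- the inner sum
  have hsum : ∑ i, M j i * conj9 (M k i)
      = φ ((∑ i, Γ j i * Γ k i) + Γ j k + if j = k then 2 else 0) := by
    have hstep : ∀ i, M j i * conj9 (M k i)
        = φ (Γ j i) * φ (Γ k i)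
          + (if k = i then ω ^ 3 * φ (Γ j i) else 0)
          + (if j = i then ω * φ (Γ k i) else 0)
          + (if j = i then (if k = i then ω ^ 4 else 0) else 0) := by
      intro i
      rw [conj9, hcube, hM]
      split_ifs with h1 h2 h2 <;> ring
    rw [Finset.sum_congr rfl (fun i _ => hstep i)]
    simp only [Finset.sum_add_distrib, Finset.sum_ite_eq, Finset.mem_univ, if_true]
    have hgkj : Γ k j = Γ j k := hsymm.apply j k
    rw [hgkj]
    have hω1 : ω + ω ^ 3 = 1 := by linear_combination (ω + 1) * hω + ω * h3
    have hω4 : ω ^ 4 = 2 := by linear_combination (ω^2 + ω + 2) * hω + ω * h3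
    simp only [map_add, map_sum, map_mul]
    have hite : (if k = j then ω ^ 4 else 0) = φ (if j = k then 2 else 0) := by
      by_cases hjk : j = k
      · subst hjk
        rw [if_pos rfl, if_pos rfl, hω4, show (2:F3) = 1 + 1 from rfl, map_add, map_one]
        norm_num
      · rw [if_neg (fun h => hjk h.symm), if_neg hjk, map_zero]
    rw [hite]
    linear_combination φ (Γ j k) * hω1
  rw [herm, tr9, hsum]
  set t := (∑ i, Γ j i * Γ k i) + Γ j k + if j = k then 2 else 0 with ht
  rw [mul_pow, hφ3]
  have hω6 : ω ^ 2 + (ω ^ 2) ^ 3 = 0 := by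
    linear_combination (ω^4 + ω^3 + 2*ω^2 + 3*ω + 6) * hω + (3*ω + 2) * h3
  linear_combination φ t * hω6
end

section
/- Let Γ be a symmetric n×n matrix over GF(3) with zero diagonal and C = Γ + ωI over GF(9). Then the rows of C are linearly independent over GF(3), so the GF(3)-span of the rows of C has exactly 3^n elements; consequently the code generated by C is self-dual with respect to the Hermitian trace inner product. -/
open scoped BigOperators

noncomputable instance : Fintype F9 := Fintype.ofFinite F9

lemma F9char : (3 : F9) = 0 := by exact_mod_cast CharP.cast_eq_zero F9 3

lemma F9card : Fintype.card F9 = 9 := by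
  have := GaloisField.card 3 2 (by norm_num); simpa [Nat.card_eq_fintype_card] using this

lemma pow9 (x : F9) : x ^ 9 = x := by
  have := FiniteField.pow_card x; rwa [F9card] at this

lemma frob_add (x y : F9) : (x + y) ^ 3 = x ^ 3 + y ^ 3 := add_pow_char x y 3

lemma alg_pow3 (c : F3) : (algebraMap F3 F9 c) ^ 3 = algebraMap F3 F9 c := by
  rw [← map_pow, ZMod.pow_card]

lemma alg_inj : Function.Injective (algebraMap F3 F9) := (algebraMap F3 F9).injective

lemma omega_indep (ω : F9) (hω : ω ^ 2 = ω + 1) (a b : F3)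
    (h : algebraMap F3 F9 a + algebraMap F3 F9 b * ω = 0) : a = 0 ∧ b = 0 := by
  by_cases hb : b = 0
  · subst hb
    simp only [map_zero, zero_mul, add_zero] at h
    exact ⟨alg_inj (by simpa using h), rfl⟩
  · exfalso
    have hb9 : algebraMap F3 F9 b ≠ 0 := fun hc => hb (alg_inj (by simpa using hc))
    have hωeq : ω = algebraMap F3 F9 (-a * b⁻¹) := by
      rw [map_mul, map_neg, map_inv₀]
      field_simp
      linear_combination h
    set c : F3 := -a * b⁻¹
    have : algebraMap F3 F9 (c ^ 2) = algebraMap F3 F9 (c + 1) := by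
      rw [map_pow, map_add, map_one, ← hωeq, hω]
    have hc : c ^ 2 = c + 1 := alg_inj this
    have : ∀ d : F3, d ^ 2 ≠ d + 1 := by decide
    exact this c hc

lemma li_one_omega (ω : F9) (hω : ω ^ 2 = ω + 1) :
    LinearIndependent F3 ![(1 : F9), ω] := by
  rw [LinearIndependent.pair_iff]
  intro s t hst
  refine omega_indep ω hω s t ?_
  simpa [Algebra.smul_def] using hst

noncomputable def basisOmega (ω : F9) (hω : ω ^ 2 = ω + 1) : Module.Basis (Fin 2) F3 F9 :=
  basisOfLinearIndependentOfCardEqFinrank (li_one_omega ω hω)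
    (by rw [GaloisField.finrank 3 (by norm_num)]; simp)

lemma basisOmega_apply (ω : F9) (hω : ω ^ 2 = ω + 1) :
    ⇑(basisOmega ω hω) = ![(1 : F9), ω] :=
  coe_basisOfLinearIndependentOfCardEqFinrank _ _

lemma exists_repr (ω : F9) (hω : ω ^ 2 = ω + 1) (x : F9) :
    ∃ a b : F3, x = algebraMap F3 F9 a + algebraMap F3 F9 b * ω := by
  have h := Module.Basis.sum_repr (basisOmega ω hω) x
  refine ⟨(basisOmega ω hω).repr x 0, (basisOmega ω hω).repr x 1, ?_⟩
  conv_lhs => rw [← h]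
  rw [Fin.sum_univ_two, basisOmega_apply]
  simp [Algebra.smul_def]

noncomputable def T9 (ω : F9) (hω : ω ^ 2 = ω + 1) : F9 →ₗ[F3] F3 :=
  (basisOmega ω hω).coord 0

lemma T9_alg (ω : F9) (hω : ω ^ 2 = ω + 1) (s : F3) :
    T9 ω hω (algebraMap F3 F9 s) = s := by
  have h1 : algebraMap F3 F9 s = s • (basisOmega ω hω) 0 := by
    rw [basisOmega_apply]; simp [Algebra.smul_def]
  rw [T9, h1, map_smul, Module.Basis.coord_apply, Module.Basis.repr_self]
  simp

lemma omega_cube (ω : F9) (hω : ω ^ 2 = ω + 1) : ω ^ 3 = 2 * ω + 1 := by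
  linear_combination (ω + 1) * hω

lemma omega_six (ω : F9) (hω : ω ^ 2 = ω + 1) : (ω ^ 2) ^ 3 = 2 * ω + 2 := by
  linear_combination (ω ^ 3 + 2 * ω + 1) * omega_cube ω hω + 4 * hω + (2 * ω + 1) * F9char

lemma omega_four (ω : F9) (hω : ω ^ 2 = ω + 1) : ω ^ 4 = 2 := by
  linear_combination ω * omega_cube ω hω + 2 * hω + ω * F9char

lemma tr9_key (ω : F9) (hω : ω ^ 2 = ω + 1) (t : F3) :
    tr9 (ω ^ 2 * algebraMap F3 F9 t) = 0 := by
  rw [tr9, mul_pow, alg_pow3, omega_six ω hω, hω]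
  linear_combination (algebraMap F3 F9 t * (ω + 1)) * F9char

lemma tr9_mem (ω : F9) (hω : ω ^ 2 = ω + 1) (x : F9) :
    ∃ s : F3, tr9 x = algebraMap F3 F9 s := by
  obtain ⟨a, b, rfl⟩ := exists_repr ω hω x
  refine ⟨2 * a + b, ?_⟩
  rw [tr9, frob_add, alg_pow3, mul_pow, alg_pow3, omega_cube ω hω, map_add, map_mul]
  have h2 : algebraMap F3 F9 2 = 2 := map_ofNat _ 2
  rw [h2]
  linear_combination (algebraMap F3 F9 b * ω) * F9char

lemma tr9_add (x y : F9) : tr9 (x + y) = tr9 x + tr9 y := by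
  rw [tr9, tr9, tr9, frob_add]; ring

lemma tr9_alg_smul (c : F3) (x : F9) :
    tr9 (algebraMap F3 F9 c * x) = algebraMap F3 F9 c * tr9 x := by
  rw [tr9, tr9, mul_pow, alg_pow3]; ring

lemma herm_add_left {n : ℕ} (ω : F9) (u u' v : Fin n → F9) :
    herm ω (u + u') v = herm ω u v + herm ω u' v := by
  rw [herm, herm, herm, ← tr9_add, ← mul_add, ← Finset.sum_add_distrib]
  congr 2
  exact Finset.sum_congr rfl fun i _ => by simp [add_mul]

lemma herm_smul_left {n : ℕ} (ω : F9) (a : F3) (u v : Fin n → F9) :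
    herm ω (a • u) v = a • herm ω u v := by
  rw [herm, herm, Algebra.smul_def (A := F9), ← tr9_alg_smul]
  congr 1
  rw [Finset.sum_congr rfl fun i (_ : i ∈ Finset.univ) =>
    (show (a • u) i * conj9 (v i) = algebraMap F3 F9 a * (u i * conj9 (v i)) by
      simp only [Pi.smul_apply, Algebra.smul_def]; ring), ← Finset.mul_sum]
  ring

lemma herm_add_right {n : ℕ} (ω : F9) (u v v' : Fin n → F9) :
    herm ω u (v + v') = herm ω u v + herm ω u v' := by
  rw [herm, herm, herm, ← tr9_add, ← mul_add, ← Finset.sum_add_distrib]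
  congr 2
  exact Finset.sum_congr rfl fun i _ => by
    simp only [Pi.add_apply, conj9, frob_add]; ring

lemma herm_smul_right {n : ℕ} (ω : F9) (a : F3) (u v : Fin n → F9) :
    herm ω u (a • v) = a • herm ω u v := by
  rw [herm, herm, Algebra.smul_def (A := F9), ← tr9_alg_smul]
  congr 1
  rw [Finset.sum_congr rfl fun i (_ : i ∈ Finset.univ) =>
    (show u i * conj9 ((a • v) i) = algebraMap F3 F9 a * (u i * conj9 (v i)) by
      simp only [Pi.smul_apply, conj9, Algebra.smul_def, mul_pow, alg_pow3]; ring),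
    ← Finset.mul_sum]
  ring

lemma cube_sum_swap {n : ℕ} (ω : F9) (hω : ω ^ 2 = ω + 1) (u v : Fin n → F9) :
    (ω ^ 2 * ∑ i, u i * conj9 (v i)) ^ 3 = 2 * (ω ^ 2 * ∑ i, v i * conj9 (u i)) := by
  rw [mul_pow]
  have hsum : (∑ i, u i * conj9 (v i)) ^ 3 = ∑ i, v i * conj9 (u i) := by
    have h1 : (∑ i, u i * conj9 (v i)) ^ 3 = frobenius F9 3 (∑ i, u i * conj9 (v i)) := by
      rw [frobenius_def]
    rw [h1, map_sum]
    refine Finset.sum_congr rfl fun i _ => ?_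
    rw [frobenius_def, conj9, conj9, mul_pow, ← pow_mul]
    norm_num
    rw [pow9]
    ring
  rw [hsum]
  linear_combination (∑ i, v i * conj9 (u i)) * omega_six ω hω -
    2 * (∑ i, v i * conj9 (u i)) * hω

lemma herm_swap {n : ℕ} (ω : F9) (hω : ω ^ 2 = ω + 1) (u v : Fin n → F9) :
    herm ω v u = - herm ω u v := by
  rw [herm, herm, tr9, tr9]
  have h1 := cube_sum_swap ω hω u v
  have h2 := cube_sum_swap ω hω v u
  linear_combination h2 + h1 +
    (ω ^ 2 * ∑ i, u i * conj9 (v i) + ω ^ 2 * ∑ i, v i * conj9 (u i)) * F9char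

lemma herm_nondeg {n : ℕ} (ω : F9) (hω : ω ^ 2 = ω + 1) (u : Fin n → F9)
    (h : ∀ v, herm ω u v = 0) : u = 0 := by
  funext i
  by_contra hi
  have hω0 : ω ≠ 0 := by
    intro h0
    rw [h0] at hω
    norm_num at hω
  have hne : ω ^ 2 * u i ≠ 0 := mul_ne_zero (pow_ne_zero _ hω0) hi
  have hv := h (Pi.single i (((ω ^ 2 * u i)⁻¹ * ω) ^ 3))
  rw [herm] at hv
  have hsum : ∑ k, u k * conj9 ((Pi.single i (((ω ^ 2 * u i)⁻¹ * ω) ^ 3) : Fin n → F9) k)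
      = u i * ((ω ^ 2 * u i)⁻¹ * ω) := by
    rw [Finset.sum_eq_single i]
    · rw [Pi.single_eq_same, conj9, ← pow_mul, show 3 * 3 = 9 from rfl, pow9]
    · intro k _ hk
      rw [Pi.single_eq_of_ne hk, conj9]
      norm_num
    · intro hmem
      exact absurd (Finset.mem_univ i) hmem
  rw [hsum] at hv
  have hval : ω ^ 2 * (u i * ((ω ^ 2 * u i)⁻¹ * ω)) = ω := by
    field_simp
    exact mul_inv_cancel₀ hi
  rw [hval] at hv
  rw [tr9, omega_cube ω hω] at hv
  have : (1 : F9) = 0 := by linear_combination hv - ω * F9char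
  exact one_ne_zero this

lemma row_apply {n : ℕ} (Γ : Matrix (Fin n) (Fin n) F3) (ω : F9) (j i : Fin n) :
    (Γ.map (algebraMap F3 F9) + ω • (1 : Matrix (Fin n) (Fin n) F9)) j i
      = algebraMap F3 F9 (Γ j i) + ω * (if j = i then 1 else 0) := by
  simp [Matrix.add_apply, Matrix.map_apply, Matrix.smul_apply, Matrix.one_apply, smul_eq_mul,
    mul_ite]

lemma herm_rows {n : ℕ} (ω : F9) (hω : ω ^ 2 = ω + 1) (Γ : Matrix (Fin n) (Fin n) F3)
    (hsymm : Γ.IsSymm) (hdiag : ∀ j, Γ j j = 0) (j k : Fin n) :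
    herm ω ((Γ.map (algebraMap F3 F9) + ω • (1 : Matrix (Fin n) (Fin n) F9)) j)
      ((Γ.map (algebraMap F3 F9) + ω • (1 : Matrix (Fin n) (Fin n) F9)) k) = 0 := by
  set φ := algebraMap F3 F9 with hφ
  set M := Γ.map (algebraMap F3 F9) + ω • (1 : Matrix (Fin n) (Fin n) F9) with hM
  have hterm : ∀ i, M j i * conj9 (M k i)
      = φ (Γ j i) * φ (Γ k i) + ω ^ 3 * (φ (Γ j i) * (if k = i then 1 else 0))
        + ω * ((if j = i then 1 else 0) * φ (Γ k i))
        + ω ^ 4 * ((if j = i then 1 else 0) * (if k = i then 1 else 0)) := by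
    intro i
    rw [hM, row_apply, row_apply, conj9, frob_add, mul_pow, alg_pow3]
    have hd : (if k = i then (1 : F9) else 0) ^ 3 = (if k = i then 1 else 0) := by
      split <;> norm_num
    rw [hd]
    ring
  have e1 : ∑ i, φ (Γ j i) * φ (Γ k i) = φ (∑ i, Γ j i * Γ k i) := by
    rw [map_sum]
    exact Finset.sum_congr rfl fun i _ => (map_mul φ _ _).symm
  have e2 : ∑ i, φ (Γ j i) * (if k = i then 1 else 0) = φ (Γ j k) := by
    simp [mul_ite, Finset.sum_ite_eq]
  have e3 : ∑ i, (if j = i then (1 : F9) else 0) * φ (Γ k i) = φ (Γ k j) := by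
    simp [ite_mul, Finset.sum_ite_eq]
  have e4 : ∑ i, (if j = i then (1 : F9) else 0) * (if k = i then 1 else 0)
      = (if k = j then 1 else 0) := by
    simp [ite_mul, Finset.sum_ite_eq, eq_comm]
  have hsum : ∑ i, M j i * conj9 (M k i)
      = φ (∑ i, Γ j i * Γ k i) + (ω ^ 3 + ω) * φ (Γ j k)
        + ω ^ 4 * (if k = j then 1 else 0) := by
    rw [Finset.sum_congr rfl fun i _ => hterm i, Finset.sum_add_distrib,
      Finset.sum_add_distrib, Finset.sum_add_distrib, ← Finset.mul_sum, ← Finset.mul_sum,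
      ← Finset.mul_sum, e1, e2, e3, e4, hsymm.apply j k]
    ring
  rw [herm, hsum]
  by_cases hjk : k = j
  · subst hjk
    rw [hdiag, map_zero, mul_zero, add_zero, if_pos rfl, omega_four ω hω]
    have : φ (∑ i, Γ k i * Γ k i) + 2 * 1 = φ ((∑ i, Γ k i * Γ k i) + 2) := by
      rw [map_add, map_ofNat]; ring
    rw [this]
    exact tr9_key ω hω _
  · rw [if_neg hjk, mul_zero, add_zero]
    have hc : ω ^ 3 + ω = 1 := by linear_combination omega_cube ω hω + ω * F9char
    rw [hc, one_mul, ← map_add]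
    exact tr9_key ω hω _

noncomputable def hermB {n : ℕ} (ω : F9) (hω : ω ^ 2 = ω + 1) :
    LinearMap.BilinForm F3 (Fin n → F9) :=
  LinearMap.mk₂ F3 (fun u v => T9 ω hω (herm ω u v))
    (fun u u' v => by rw [herm_add_left, map_add])
    (fun a u v => by rw [herm_smul_left, map_smul])
    (fun u v v' => by rw [herm_add_right, map_add])
    (fun a u v => by rw [herm_smul_right, map_smul])

lemma hermB_apply {n : ℕ} (ω : F9) (hω : ω ^ 2 = ω + 1) (u v : Fin n → F9) :
    hermB ω hω u v = T9 ω hω (herm ω u v) := rfl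

lemma hermB_zero_iff {n : ℕ} (ω : F9) (hω : ω ^ 2 = ω + 1) (u v : Fin n → F9) :
    hermB ω hω u v = 0 ↔ herm ω u v = 0 := by
  obtain ⟨s, hs⟩ : ∃ s : F3, herm ω u v = algebraMap F3 F9 s :=
    tr9_mem ω hω (ω ^ 2 * ∑ i, u i * conj9 (v i))
  rw [hermB_apply, hs, T9_alg]
  constructor
  · rintro rfl; exact map_zero _
  · intro h; exact alg_inj (by rw [h, map_zero])

/-- For `Γ` symmetric over GF(3) with zero diagonal and `C = Γ + ωI`, the rows
of `C` are GF(3)-linearly independent, the GF(3)-span of the rows has exactly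
`3 ^ n` elements, and the code generated by `C` is self-dual with respect to
the Hermitian trace inner product. -/
theorem standard_form_selfdual {n : ℕ} (ω : F9) (hω : ω ^ 2 = ω + 1)
    (Γ : Matrix (Fin n) (Fin n) F3)
    (hsymm : Γ.IsSymm) (hdiag : ∀ j, Γ j j = 0) :
    let M : Matrix (Fin n) (Fin n) F9 :=
      Γ.map (algebraMap F3 F9) + ω • (1 : Matrix (Fin n) (Fin n) F9)
    let C : Submodule F3 (Fin n → F9) :=
      Submodule.span F3 (Set.range fun j => M j)
    LinearIndependent F3 (fun j => M j) ∧
    Nat.card C = 3 ^ n ∧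
    (∀ u : Fin n → F9, u ∈ C ↔ ∀ c ∈ C, herm ω u c = 0) := by
  intro M C
  have hli : LinearIndependent F3 (fun j => M j) := by
    rw [Fintype.linearIndependent_iff]
    intro g hg i
    have hgi := congrFun hg i
    simp only [Finset.sum_apply, Pi.smul_apply, Pi.zero_apply] at hgi
    have hterm : ∀ j, g j • M j i
        = algebraMap F3 F9 (g j * Γ j i)
          + (if j = i then algebraMap F3 F9 (g j) * ω else 0) := by
      intro j
      rw [show M j i = algebraMap F3 F9 (Γ j i) + ω * (if j = i then 1 else 0) from
        row_apply Γ ω j i, Algebra.smul_def, map_mul]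
      split <;> ring
    rw [Finset.sum_congr rfl fun j _ => hterm j, Finset.sum_add_distrib,
      Finset.sum_ite_eq' Finset.univ i, ← map_sum] at hgi
    simp only [Finset.mem_univ, if_true] at hgi
    exact (omega_indep ω hω _ _ hgi).2
  haveI : Fintype C := Fintype.ofFinite C
  have hfr : Module.finrank F3 C = n := by
    rw [finrank_span_eq_card hli]
    simp
  refine ⟨hli, ?_, ?_⟩
  · rw [Nat.card_eq_fintype_card, Module.card_eq_pow_finrank (K := F3) (V := C), ZMod.card, hfr]
  · set B : LinearMap.BilinForm F3 (Fin n → F9) := hermB ω hω with hB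
    have hrefl : B.IsRefl := by
      intro u v huv
      rw [hB, hermB_zero_iff] at huv ⊢
      rw [herm_swap ω hω u v, huv, neg_zero]
    have hnd : B.Nondegenerate := by
      refine (LinearMap.IsRefl.nondegenerate_iff_separatingLeft hrefl).2 ?_
      intro u hu
      exact herm_nondeg ω hω u fun v => (hermB_zero_iff ω hω u v).1 (hu v)
    have hBrow : ∀ j k : Fin n, B (M j) (M k) = 0 := fun j k =>
      (hermB_zero_iff ω hω _ _).2 (herm_rows ω hω Γ hsymm hdiag j k)
    have hle : C ≤ B.orthogonal C := by
      rw [show C = Submodule.span F3 (Set.range fun j => M j) from rfl, Submodule.span_le]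
      rintro x ⟨j, rfl⟩
      simp only [SetLike.mem_coe]
      rw [LinearMap.BilinForm.mem_orthogonal_iff]
      intro c hc
      have hker : C ≤ LinearMap.ker (B.flip (M j)) := by
        rw [show C = Submodule.span F3 (Set.range fun j => M j) from rfl, Submodule.span_le]
        rintro y ⟨k, rfl⟩
        simp only [SetLike.mem_coe, LinearMap.mem_ker, LinearMap.flip_apply]
        exact hBrow k j
      have := hker hc
      exact this
    have hV : Module.finrank F3 (Fin n → F9) = 2 * n := by
      rw [Module.finrank_pi_fintype]
      simp [GaloisField.finrank 3 (by norm_num : 2 ≠ 0), Finset.sum_const, mul_comm]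
    have horth : Module.finrank F3 (B.orthogonal C) = n := by
      rw [LinearMap.BilinForm.finrank_orthogonal hnd, hV, hfr]
      omega
    have heq : C = B.orthogonal C :=
      Submodule.eq_of_le_of_finrank_le hle (by rw [horth, hfr])
    intro u
    constructor
    · intro hu c hc
      have h1 : u ∈ B.orthogonal C := heq ▸ hu
      have h2 := LinearMap.BilinForm.mem_orthogonal_iff.1 h1 c hc
      have h3 : herm ω c u = 0 := (hermB_zero_iff ω hω c u).1 h2
      rw [herm_swap ω hω c u, h3, neg_zero]
    · intro h
      rw [heq, LinearMap.BilinForm.mem_orthogonal_iff]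
      intro c hc
      show B c u = 0
      rw [hB, hermB_zero_iff, herm_swap ω hω u c, h c hc, neg_zero]
end
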